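/- Let ε ∈ [0,1), 0 ≤ p ≤ q < 1−ε, and c ≥ 0, and let μ ∈ [q, 1−ε). If x ∈ [p, q] satisfies d(x/(1−ε), q/(1−ε)) = (1/(1+c)) · d(p/(1−ε), q/(1−ε)) and x' ∈ [p, μ] satisfies d(x'/(1−ε), μ/(1−ε)) = (1/(1+c)) · d(p/(1−ε), μ/(1−ε)), then x ≤ x'. -/

import Mathlib

open MeasureTheory ProbabilityTheory Filter Real
open scoped ENNReal

noncomputable section

/-- KL divergence between Bernoulli distributions of means `p` and `q` (real-valued version,
with the convention `0 * log 0 = 0`, which holds definitionally since `Real.log 0 = 0`). -/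
def klBern (p q : ℝ) : ℝ :=
  p * Real.log (p / q) + (1 - p) * Real.log ((1 - p) / (1 - q))

private lemma mul_log_div' (x y : ℝ) (hx : 0 ≤ x) (hy : 0 < y) :
    x * Real.log (x / y) = x * Real.log x - x * Real.log y := by
  rcases eq_or_lt_of_le hx with h | h
  · simp [← h]
  · rw [Real.log_div (ne_of_gt h) (ne_of_gt hy)]; ring

private lemma klBern_expand (a b : ℝ) (ha0 : 0 ≤ a) (ha1 : a ≤ 1) (hb0 : 0 < b) (hb1 : b < 1) :
    klBern a b = a * Real.log a - a * Real.log b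
      + (1 - a) * Real.log (1 - a) - (1 - a) * Real.log (1 - b) := by
  unfold klBern
  rw [mul_log_div' a b ha0 hb0, mul_log_div' (1 - a) (1 - b) (by linarith) (by linarith)]
  ring

private lemma sub_le_mul_log_div (u v : ℝ) (hu : 0 ≤ u) (hv : 0 < v) :
    u - v ≤ u * Real.log (u / v) := by
  rcases eq_or_lt_of_le hu with h | h
  · simp [← h]; linarith
  · have h1 : Real.log (v / u) ≤ v / u - 1 := Real.log_le_sub_one_of_pos (by positivity)
    have h2 : Real.log (u / v) = - Real.log (v / u) := by
      rw [← Real.log_inv]; congr 1; field_simp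
    rw [h2]
    have h3 : u * (v / u - 1) = v - u := by field_simp
    nlinarith
private lemma sub_lt_mul_log_div (u v : ℝ) (hu : 0 < u) (hv : 0 < v) (huv : u ≠ v) :
    u - v < u * Real.log (u / v) := by
  have h1 : Real.log (v / u) < v / u - 1 :=
    Real.log_lt_sub_one_of_pos (by positivity) (by
      intro h; apply huv; field_simp at h; linarith)
  have h2 : Real.log (u / v) = - Real.log (v / u) := by
    rw [← Real.log_inv]; congr 1; field_simp
  rw [h2]
  have h3 : u * (v / u - 1) = v - u := by field_simp
  nlinarith

private lemma klBern_nonneg (a b : ℝ) (ha0 : 0 ≤ a) (ha1 : a ≤ 1) (hb0 : 0 < b) (hb1 : b < 1) :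
    0 ≤ klBern a b := by
  have h1 := sub_le_mul_log_div a b ha0 hb0
  have h2 := sub_le_mul_log_div (1 - a) (1 - b) (by linarith) (by linarith)
  unfold klBern; linarith

private lemma klBern_pos (a b : ℝ) (ha0 : 0 ≤ a) (hab : a < b) (hb1 : b < 1) :
    0 < klBern a b := by
  rcases eq_or_lt_of_le ha0 with h | h
  · unfold klBern
    rw [← h]
    have hb0 : 0 < b := by linarith
    have : Real.log (1 / (1 - b)) = - Real.log (1 - b) := by
      rw [← Real.log_inv]; congr 1; field_simp
    simp only [zero_mul, sub_zero, one_mul, this]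
    have := Real.log_neg (by linarith : (0:ℝ) < 1 - b) (by linarith : (1:ℝ) - b < 1)
    linarith
  · have h1 := sub_lt_mul_log_div a b h (by linarith) (ne_of_lt hab)
    have h2 := sub_le_mul_log_div (1 - a) (1 - b) (by linarith) (by linarith)
    unfold klBern; linarith

/-- Monotonicity of `klBern a ·` in the second argument, above `a`. -/
private lemma klBern_mono_right (a b m : ℝ) (ha0 : 0 ≤ a) (hab : a ≤ b) (hbm : b ≤ m)
    (hb0 : 0 < b) (hm1 : m < 1) : klBern a b ≤ klBern a m := by
  have hm0 : 0 < m := lt_of_lt_of_le hb0 hbm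
  have hb1 : b < 1 := lt_of_le_of_lt hbm hm1
  have ha1 : a ≤ 1 := le_trans hab (le_of_lt hb1)
  have hid : klBern a m = klBern a b + klBern b m
      + (b - a) * (Real.log m - Real.log b) + (b - a) * (Real.log (1 - b) - Real.log (1 - m)) := by
    rw [klBern_expand a m ha0 ha1 hm0 hm1, klBern_expand a b ha0 ha1 hb0 hb1,
      klBern_expand b m (le_of_lt hb0) (le_of_lt hb1) hm0 hm1]
    ring
  have hC : 0 ≤ klBern b m := klBern_nonneg b m (le_of_lt hb0) (le_of_lt hb1) hm0 hm1
  have h1 : 0 ≤ (b - a) * (Real.log m - Real.log b) :=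
    mul_nonneg (by linarith) (by have := Real.log_le_log hb0 hbm; linarith)
  have h2 : 0 ≤ (b - a) * (Real.log (1 - b) - Real.log (1 - m)) :=
    mul_nonneg (by linarith)
      (by have := Real.log_le_log (by linarith : (0:ℝ) < 1 - m) (by linarith : 1 - m ≤ 1 - b)
          linarith)
  linarith

/-- Strict antitonicity of `klBern · m` on `[0, m]`. -/
private lemma klBern_strict_anti_left (a b m : ℝ) (ha0 : 0 ≤ a) (hab : a < b) (hbm : b ≤ m)
    (hm1 : m < 1) : klBern b m < klBern a m := by
  have hb0 : 0 < b := lt_of_le_of_lt ha0 hab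
  have hm0 : 0 < m := lt_of_lt_of_le hb0 hbm
  have hb1 : b < 1 := lt_of_le_of_lt hbm hm1
  have ha1 : a ≤ 1 := by linarith
  have hid : klBern a m - klBern b m = klBern a b
      + (b - a) * (Real.log m - Real.log b) + (b - a) * (Real.log (1 - b) - Real.log (1 - m)) := by
    rw [klBern_expand a m ha0 ha1 hm0 hm1, klBern_expand b m (le_of_lt hb0) (le_of_lt hb1) hm0 hm1,
      klBern_expand a b ha0 ha1 hb0 hb1]
    ring
  have hpos : 0 < klBern a b := klBern_pos a b ha0 hab hb1
  have h1 : 0 ≤ (b - a) * (Real.log m - Real.log b) :=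
    mul_nonneg (by linarith) (by have := Real.log_le_log hb0 hbm; linarith)
  have h2 : 0 ≤ (b - a) * (Real.log (1 - b) - Real.log (1 - m)) :=
    mul_nonneg (by linarith)
      (by have := Real.log_le_log (by linarith : (0:ℝ) < 1 - m) (by linarith : 1 - m ≤ 1 - b)
          linarith)
  linarith

/-- Key step: for `0 ≤ P ≤ X ≤ Q ≤ M < 1` with `P < Q`, one has
`klBern P M * klBern X Q ≤ klBern P Q * klBern X M`. -/
private lemma klBern_cross (P Q M X : ℝ) (hP0 : 0 ≤ P) (hPQ : P < Q) (hQM : Q ≤ M) (hM1 : M < 1)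
    (hX1 : P ≤ X) (hX2 : X ≤ Q) :
    klBern P M * klBern X Q ≤ klBern P Q * klBern X M := by
  have hQ0 : 0 < Q := lt_of_le_of_lt hP0 hPQ
  have hM0 : 0 < M := lt_of_lt_of_le hQ0 hQM
  have hQ1 : Q < 1 := lt_of_le_of_lt hQM hM1
  have hP1 : P < 1 := lt_trans hPQ hQ1
  have hX0 : 0 ≤ X := le_trans hP0 hX1
  have hXlt1 : X < 1 := lt_of_le_of_lt hX2 hQ1
  set a : ℝ := (Q - X) / (Q - P) with ha_def
  set b : ℝ := (X - P) / (Q - P) with hb_def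
  have hQP : (0:ℝ) < Q - P := by linarith
  have ha : 0 ≤ a := div_nonneg (by linarith) (le_of_lt hQP)
  have hb : 0 ≤ b := div_nonneg (by linarith) (le_of_lt hQP)
  have hab : a + b = 1 := by rw [ha_def, hb_def]; field_simp; ring
  have hXeq : a * P + b * Q = X := by rw [ha_def, hb_def]; field_simp; ring
  -- convexity of x ↦ x log x at the triple
  have hconv := Real.convexOn_mul_log.2 (Set.mem_Ici.2 hP0) (Set.mem_Ici.2 (le_of_lt hQ0)) ha hb hab
  simp only [smul_eq_mul] at hconv
  rw [hXeq] at hconv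
  have hconv2 := Real.convexOn_mul_log.2 (Set.mem_Ici.2 (by linarith : (0:ℝ) ≤ 1 - P))
    (Set.mem_Ici.2 (by linarith : (0:ℝ) ≤ 1 - Q)) ha hb hab
  simp only [smul_eq_mul] at hconv2
  have h1X : a * (1 - P) + b * (1 - Q) = 1 - X := by
    have : a * (1 - P) + b * (1 - Q) = (a + b) - (a * P + b * Q) := by ring
    rw [this, hab, hXeq]
  rw [h1X] at hconv2
  -- φ values
  set φP : ℝ := P * Real.log P + (1 - P) * Real.log (1 - P) with hφP
  set φQ : ℝ := Q * Real.log Q + (1 - Q) * Real.log (1 - Q) with hφQ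
  set φX : ℝ := X * Real.log X + (1 - X) * Real.log (1 - X) with hφX
  have hφ : φX ≤ a * φP + b * φQ := by rw [hφP, hφQ, hφX]; linarith
  set A : ℝ := klBern P Q with hA_def
  set B : ℝ := klBern P M with hB_def
  set C : ℝ := klBern Q M with hC_def
  have hApos : 0 < A := klBern_pos P Q hP0 hPQ hQ1
  have hAB : A ≤ B := klBern_mono_right P Q M hP0 (le_of_lt hPQ) hQM hQ0 hM1
  have hC : 0 ≤ C := klBern_nonneg Q M (le_of_lt hQ0) (le_of_lt hQ1) hM0 hM1
  -- the key algebraic identity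
  have hid : A * klBern X M - B * klBern X Q
      = (A - B) * (φX - a * φP - b * φQ) + b * A * C := by
    rw [hA_def, hB_def, hC_def, hφP, hφQ, hφX, ha_def, hb_def,
      klBern_expand X M hX0 (le_of_lt hXlt1) hM0 hM1,
      klBern_expand X Q hX0 (le_of_lt hXlt1) hQ0 hQ1,
      klBern_expand P Q hP0 (le_of_lt hP1) hQ0 hQ1,
      klBern_expand P M hP0 (le_of_lt hP1) hM0 hM1,
      klBern_expand Q M (le_of_lt hQ0) (le_of_lt hQ1) hM0 hM1]
    field_simp
    ring
  nlinarith [mul_nonneg (by linarith : (0:ℝ) ≤ B - A) (by linarith : (0:ℝ) ≤ a * φP + b * φQ - φX),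
    mul_nonneg (mul_nonneg hb (le_of_lt hApos)) hC]

/-- **Lemma.** The solution of the scaled-KL equation increases with the second argument:
if `x ∈ [p, q]` solves the equation at level `q` and `x' ∈ [p, μ]` solves it at level
`μ ∈ [q, 1−ε)`, then `x ≤ x'`. -/
theorem klBern_equation_solution_mono (ε p q c μ x x' : ℝ) (hε0 : 0 ≤ ε) (hε1 : ε < 1)
    (hp0 : 0 ≤ p) (hpq : p ≤ q) (hq : q < 1 - ε) (hc : 0 ≤ c)
    (hμ1 : q ≤ μ) (hμ2 : μ < 1 - ε)
    (hx : x ∈ Set.Icc p q)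
    (heq : klBern (x / (1 - ε)) (q / (1 - ε)) =
      (1 / (1 + c)) * klBern (p / (1 - ε)) (q / (1 - ε)))
    (hx' : x' ∈ Set.Icc p μ)
    (heq' : klBern (x' / (1 - ε)) (μ / (1 - ε)) =
      (1 / (1 + c)) * klBern (p / (1 - ε)) (μ / (1 - ε))) :
    x ≤ x' := by
  obtain ⟨hx1, hx2⟩ := hx
  obtain ⟨hx'1, hx'2⟩ := hx'
  rcases eq_or_lt_of_le hpq with hpq' | hpq'
  · -- p = q : then x = p ≤ x'
    have : x = p := le_antisymm (hpq' ▸ hx2) hx1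
    linarith
  · have hr : (0:ℝ) < 1 - ε := by linarith
    set r : ℝ := 1 - ε with hr_def
    set P : ℝ := p / r with hP_def
    set Q : ℝ := q / r with hQ_def
    set M : ℝ := μ / r with hM_def
    set X : ℝ := x / r with hX_def
    set X' : ℝ := x' / r with hX'_def
    have hP0 : 0 ≤ P := div_nonneg hp0 (le_of_lt hr)
    have hPQ : P < Q := (div_lt_div_iff_of_pos_right hr).2 hpq'
    have hQM : Q ≤ M := (div_le_div_iff_of_pos_right hr).2 hμ1
    have hM1 : M < 1 := (div_lt_one hr).2 hμ2
    have hX1 : P ≤ X := (div_le_div_iff_of_pos_right hr).2 hx1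
    have hX2 : X ≤ Q := (div_le_div_iff_of_pos_right hr).2 hx2
    have hX'1 : P ≤ X' := (div_le_div_iff_of_pos_right hr).2 hx'1
    have hX'2 : X' ≤ M := (div_le_div_iff_of_pos_right hr).2 hx'2
    have hQ0 : 0 < Q := lt_of_le_of_lt hP0 hPQ
    have hM0 : 0 < M := lt_of_lt_of_le hQ0 hQM
    have hQ1 : Q < 1 := lt_of_le_of_lt hQM hM1
    have hX'0 : 0 ≤ X' := le_trans hP0 hX'1
    set t : ℝ := 1 / (1 + c) with ht_def
    have ht0 : 0 < t := by positivity
    have ht1 : t ≤ 1 := by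
      rw [ht_def, div_le_one (by linarith)]; linarith
    -- key inequality
    have hcross := klBern_cross P Q M X hP0 hPQ hQM hM1 hX1 hX2
    have hXQ : klBern X Q = t * klBern P Q := heq
    have hX'M : klBern X' M = t * klBern P M := heq'
    have hApos : 0 < klBern P Q := klBern_pos P Q hP0 hPQ hQ1
    -- klBern X M ≥ t * klBern P M = klBern X' M
    have hmain : klBern X' M ≤ klBern X M := by
      rw [hX'M]
      have h1 : klBern P M * (t * klBern P Q) ≤ klBern P Q * klBern X M := by
        rw [← hXQ]; exact hcross
      have h2 : klBern P M * (t * klBern P Q) = klBern P Q * (t * klBern P M) := by ring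
      rw [h2] at h1
      exact le_of_mul_le_mul_left h1 hApos
    -- conclude by strict antitonicity
    have hXX' : X ≤ X' := by
      by_contra hcon
      push_neg at hcon
      have := klBern_strict_anti_left X' X M hX'0 hcon (le_trans hX2 hQM) hM1
      linarith
    calc x = X * r := by rw [hX_def]; field_simp
    _ ≤ X' * r := by nlinarith
    _ = x' := by rw [hX'_def]; field_simp

end
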